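/- arXiv:2506.12163 — 2 statements merged into one kernel-verified Lean document; each statement's English description precedes it below -/
import Mathlib

section
/- Let g(r, d) = d/√r. There exist a constant C > 0 and a real number r* ≥ 1 such that for all real r ≥ r* and all real d with 1 ≤ d ≤ r, the drift expression G(r, d) := ((r + d − 4)/2)·(g(r+1, d+3) − g(r, d)) + ((r − d − 4)/2)·(g(r+1, d−3) − g(r, d)) satisfies |G(r, d) − (5/2)·d/√r| ≤ C · d / r^{3/2}. -/
open Real

/-- Drift estimate for the rescaled process `L_N = D/√R`: with
`g(r, d) = d/√r`, the drift
`G(r, d) = ((r+d−4)/2)(g(r+1, d+3) − g(r, d)) + ((r−d−4)/2)(g(r+1, d−3) − g(r, d))`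
satisfies `|G(r, d) − (5/2) d/√r| ≤ C d / r^{3/2}` for `r ≥ r*` and `1 ≤ d ≤ r`. -/
theorem drift_estimate :
    ∃ C : ℝ, 0 < C ∧ ∃ rstar : ℝ, 1 ≤ rstar ∧
      ∀ r : ℝ, rstar ≤ r → ∀ d : ℝ, 1 ≤ d → d ≤ r →
        |((r + d - 4)/2) * ((d + 3) / Real.sqrt (r + 1) - d / Real.sqrt r)
            + ((r - d - 4)/2) * ((d - 3) / Real.sqrt (r + 1) - d / Real.sqrt r)
            - (5/2) * d / Real.sqrt r| ≤ C * d / r ^ ((3 : ℝ)/2) := by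
  refine ⟨2, by norm_num, 3, by norm_num, ?_⟩
  intro r hr d hd1 hdr
  have hr0 : (0:ℝ) < r := by linarith
  set s := Real.sqrt r with hs
  set t := Real.sqrt (r+1) with ht
  have hs0 : 0 < s := Real.sqrt_pos.2 hr0
  have ht0 : 0 < t := Real.sqrt_pos.2 (by linarith)
  have hs2 : s^2 = r := Real.sq_sqrt hr0.le
  have ht2 : t^2 = r+1 := Real.sq_sqrt (by linarith)
  have hrp : r ^ ((3:ℝ)/2) = r * s := by
    rw [hs, show (3:ℝ)/2 = 1 + 1/2 by norm_num, Real.rpow_add hr0, Real.rpow_one,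
      ← Real.sqrt_eq_rpow]
  have hE : ((r + d - 4)/2) * ((d + 3) / t - d / s)
      + ((r - d - 4)/2) * ((d - 3) / t - d / s) - (5/2) * d / s
      = d * ((r-1)/t - (2*r-3)/(2*s)) := by
    field_simp
    ring
  rw [hE, hrp]
  have hN0 : 0 ≤ (r-1)/t - (2*r-3)/(2*s) := by
    rw [sub_nonneg, div_le_div_iff₀ (by positivity) ht0]
    have h1 : ((r-1)*(2*s))^2 - ((2*r-3)*t)^2 = 7*r - 9 := by
      linear_combination (4*(r-1)^2)*hs2 - (2*r-3)^2*ht2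
    have hsum : 0 < (2*r-3)*t + (r-1)*(2*s) :=
      add_pos (mul_pos (by linarith) ht0) (mul_pos (by linarith) (by linarith))
    nlinarith [h1, hsum]
  have hNle : (r-1)/t - (2*r-3)/(2*s) ≤ 2/(r*s) := by
    have key : 2*r*s*(r-1) ≤ t*(2*r^2 - 3*r + 4) := by
      have h2 : (t*(2*r^2-3*r+4))^2 - (2*r*s*(r-1))^2 = 9*r^3 + r^2 - 8*r + 16 := by
        linear_combination (2*r^2-3*r+4)^2*ht2 - (4*r^2*(r-1)^2)*hs2
      have hb : 0 < t*(2*r^2 - 3*r + 4) := mul_pos ht0 (by nlinarith)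
      have ha : 0 ≤ 2*r*s*(r-1) := by
        have : (0:ℝ) ≤ r - 1 := by linarith
        positivity
      nlinarith [h2, ha, hb]
    have h3 : (r-1)/t ≤ (2*r^2-3*r+4)/(2*r*s) := by
      rw [div_le_div_iff₀ ht0 (by positivity)]
      nlinarith [key]
    have h5 : (2*r^2-3*r+4)/(2*r*s) - (2*r-3)/(2*s) = 2/(r*s) := by
      field_simp
      ring
    linarith [h3, h5]
  rw [abs_of_nonneg (mul_nonneg (by linarith) hN0)]
  calc d * ((r-1)/t - (2*r-3)/(2*s)) ≤ d * (2/(r*s)) :=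
        mul_le_mul_of_nonneg_left hNle (by linarith)
    _ = 2 * d / (r*s) := by ring
end

section
/- Let g(r, d) = d/√r. For every η > 0 and every ε > 0 there exists r₀ ≥ 1 such that for all real r ≥ r₀ and all real d with |d| ≤ η·√r, the quadratic-variation expression F(r, d) := ((r + d − 4)/2)·(g(r+1, d+3) − g(r, d))² + ((r − d − 4)/2)·(g(r+1, d−3) − g(r, d))² satisfies |F(r, d) − 9| ≤ ε. -/
open Real

set_option maxHeartbeats 1000000 in
/-- Quadratic-variation estimate for the martingale part of `L_N = D/√R`:
with `g(r, d) = d/√r`, the expression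
`F(r, d) = ((r+d−4)/2)(g(r+1, d+3) − g(r, d))² + ((r−d−4)/2)(g(r+1, d−3) − g(r, d))²`
satisfies `|F(r, d) − 9| ≤ ε` for all `r` large enough and `|d| ≤ η √r`. -/
theorem quadratic_variation_estimate (η ε : ℝ) (hη : 0 < η) (hε : 0 < ε) :
    ∃ r₀ : ℝ, 1 ≤ r₀ ∧
      ∀ r : ℝ, r₀ ≤ r → ∀ d : ℝ, |d| ≤ η * Real.sqrt r →
        |((r + d - 4)/2) * ((d + 3) / Real.sqrt (r + 1) - d / Real.sqrt r) ^ 2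
            + ((r - d - 4)/2) * ((d - 3) / Real.sqrt (r + 1) - d / Real.sqrt r) ^ 2
            - 9| ≤ ε := by
  refine ⟨max 4 ((45 + 4 * η ^ 2) / ε), le_trans (by norm_num) (le_max_left _ _), ?_⟩
  intro r hr d hd
  have hr4 : (4 : ℝ) ≤ r := le_trans (le_max_left _ _) hr
  have hr0 : (0 : ℝ) < r := by linarith
  set s := Real.sqrt r with hs
  set t := Real.sqrt (r + 1) with ht
  have hs0 : 0 < s := Real.sqrt_pos.mpr hr0
  have ht0 : 0 < t := Real.sqrt_pos.mpr (by linarith)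
  have hs2 : s ^ 2 = r := Real.sq_sqrt hr0.le
  have ht2 : t ^ 2 = r + 1 := Real.sq_sqrt (by linarith)
  have hst : t ^ 2 = s ^ 2 + 1 := by rw [ht2, hs2]
  have hsle : s ≤ t := Real.sqrt_le_sqrt (by linarith)
  have hD0 : 0 < t - s := by nlinarith
  have h2sD : 2 * s * (t - s) ≤ 1 := by nlinarith
  have hd2 : d ^ 2 ≤ η ^ 2 * s ^ 2 := by
    nlinarith [mul_self_le_mul_self (abs_nonneg d) hd, sq_abs d]
  have hs4 : (4 : ℝ) ≤ s ^ 2 := by rw [hs2]; exact hr4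
  have hεs : 45 + 4 * η ^ 2 ≤ ε * s ^ 2 := by
    rw [hs2]
    have := le_trans (le_max_right 4 ((45 + 4 * η ^ 2) / ε)) hr
    calc 45 + 4 * η ^ 2 = ((45 + 4 * η ^ 2) / ε) * ε := by field_simp
    _ ≤ r * ε := by nlinarith
    _ = ε * r := by ring
  have key : ((r + d - 4)/2) * ((d + 3) / t - d / s) ^ 2
      + ((r - d - 4)/2) * ((d - 3) / t - d / s) ^ 2 - 9
      = (-45 * s ^ 2 + (s ^ 2 - 4) * d ^ 2 * (t - s) ^ 2
          - 6 * s * d ^ 2 * (t - s)) / (t ^ 2 * s ^ 2) := by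
    rw [← hs2]
    field_simp
    linear_combination (-18 * s ^ 2) * hst
  rw [key, abs_div, abs_of_pos (by positivity : (0:ℝ) < t ^ 2 * s ^ 2),
    div_le_iff₀ (by positivity : (0:ℝ) < t ^ 2 * s ^ 2), abs_le]
  have hts2 : s ^ 2 ≤ t ^ 2 := by nlinarith
  have h4 : s ^ 2 * (t - s) ^ 2 ≤ 1 / 4 := by nlinarith [mul_pos hs0 hD0]
  have hA : d ^ 2 * (s ^ 2 * (t - s) ^ 2) ≤ d ^ 2 * (1 / 4) :=
    mul_le_mul_of_nonneg_left h4 (sq_nonneg d)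
  have hB : d ^ 2 * (2 * s * (t - s)) ≤ d ^ 2 * 1 :=
    mul_le_mul_of_nonneg_left h2sD (sq_nonneg d)
  have hC : 0 ≤ d ^ 2 * (t - s) ^ 2 := by positivity
  have hD : 0 ≤ s * (d ^ 2 * (t - s)) := by
    have := mul_nonneg (sq_nonneg d) hD0.le
    positivity
  have hE : 0 ≤ (s ^ 2 - 4) * (d ^ 2 * (t - s) ^ 2) := mul_nonneg (by linarith) hC
  have hF : (45 + 4 * η ^ 2) * s ^ 2 ≤ ε * (s ^ 2 * s ^ 2) := by
    have := mul_le_mul_of_nonneg_right hεs (sq_nonneg s); linarith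
  have hG : ε * (s ^ 2 * s ^ 2) ≤ ε * (t ^ 2 * s ^ 2) := by
    have := mul_le_mul_of_nonneg_left (mul_le_mul_of_nonneg_right hts2 (sq_nonneg s)) hε.le
    linarith
  have hH : 0 ≤ η ^ 2 * s ^ 2 := by positivity
  constructor <;> linarith [hA, hB, hC, hD, hE, hd2, hF, hG, hH, sq_nonneg s]
end
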